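/- Let β > 0 and λ₁, λ₂, λ₃ ∈ ℝ, and let E denote expectation with respect to the product measure on ℤ³ with weight w(n₁,n₂,n₃) = e^{−βn₁² + λ₁n₁} e^{−βn₂² + λ₂n₂} e^{−βn₃² + λ₃n₃}, i.e. E[f] = ( Σ_{(n₁,n₂,n₃)∈ℤ³} f(n₁,n₂,n₃) w(n₁,n₂,n₃) ) / ( Σ_{(n₁,n₂,n₃)∈ℤ³} w(n₁,n₂,n₃) ). Then E[ e^{β(n₁ − 2n₂ + n₃)} ] = e^{3β/2} e^{(λ₁ − 2λ₂ + λ₃)/2} Z(β, λ₁/(2β)) Z(β, λ₃/(2β)), and consequently E[ e^{β(n₁ − 2n₂ + n₃)} ] − E[ e^{−β(n₁ − 2n₂ + n₃)} ] = 2 e^{3β/2} Z(β, λ₁/(2β)) Z(β, λ₃/(2β)) · sinh( (λ₁ − 2λ₂ + λ₃)/2 ). -/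

import Mathlib

/-- The theta-function ratio Z(β, α) = (Σₙ e^{−β(n−α−1/2)²}) / (Σₙ e^{−β(n−α)²}). -/
noncomputable def thetaRatio (β α : ℝ) : ℝ :=
  (∑' n : ℤ, Real.exp (-β * ((n : ℝ) - α - 1 / 2) ^ 2))
    / (∑' n : ℤ, Real.exp (-β * ((n : ℝ) - α) ^ 2))

/-- The local Gibbs product weight on ℤ³ with parameters β, λ₁, λ₂, λ₃. -/
noncomputable def gibbsWeight (β lam₁ lam₂ lam₃ : ℝ) (n : ℤ × ℤ × ℤ) : ℝ :=
  Real.exp (-β * (n.1 : ℝ) ^ 2 + lam₁ * (n.1 : ℝ))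
    * Real.exp (-β * (n.2.1 : ℝ) ^ 2 + lam₂ * (n.2.1 : ℝ))
    * Real.exp (-β * (n.2.2 : ℝ) ^ 2 + lam₃ * (n.2.2 : ℝ))

/-- Expectation with respect to the local Gibbs product measure on ℤ³. -/
noncomputable def gibbsExpect (β lam₁ lam₂ lam₃ : ℝ) (f : ℤ × ℤ × ℤ → ℝ) : ℝ :=
  (∑' n : ℤ × ℤ × ℤ, f n * gibbsWeight β lam₁ lam₂ lam₃ n)
    / (∑' n : ℤ × ℤ × ℤ, gibbsWeight β lam₁ lam₂ lam₃ n)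


/-- One-dimensional partition sum. -/
noncomputable def gS (β c : ℝ) : ℝ := ∑' n : ℤ, Real.exp (-β * (n : ℝ) ^ 2 + c * (n : ℝ))

/-- Gaussian theta denominator. -/
noncomputable def gD (β α : ℝ) : ℝ := ∑' n : ℤ, Real.exp (-β * ((n : ℝ) - α) ^ 2)

lemma gSummable_nat (β c : ℝ) (hβ : 0 < β) :
    Summable (fun n : ℕ => Real.exp (-β * (n : ℝ) ^ 2 + c * (n : ℝ))) := by
  apply summable_of_ratio_norm_eventually_le (r := Real.exp (-1))
    (by simpa using Real.exp_lt_one_iff.mpr (by norm_num : (-1:ℝ) < 0))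
  filter_upwards [Filter.eventually_ge_atTop ⌈(c + 1) / (2 * β)⌉₊] with n hn
  have hn' : (c + 1) / (2 * β) ≤ (n : ℝ) := le_trans (Nat.le_ceil _) (by exact_mod_cast hn)
  have h2β : 0 < 2 * β := by linarith
  have key : c + 1 ≤ 2 * β * n := by
    rw [div_le_iff₀ h2β] at hn'; linarith
  rw [Real.norm_eq_abs, Real.norm_eq_abs, abs_of_pos (Real.exp_pos _),
    abs_of_pos (Real.exp_pos _), ← Real.exp_add]
  apply Real.exp_le_exp.mpr
  push_cast
  nlinarith [sq_nonneg ((n:ℝ) + 1)]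

lemma gSummable (β c : ℝ) (hβ : 0 < β) :
    Summable (fun n : ℤ => Real.exp (-β * (n : ℝ) ^ 2 + c * (n : ℝ))) := by
  apply Summable.of_nat_of_neg
  · simpa using gSummable_nat β c hβ
  · have := gSummable_nat β (-c) hβ
    apply this.congr
    intro n
    push_cast
    ring_nf

lemma gSummableD (β α : ℝ) (hβ : 0 < β) :
    Summable (fun n : ℤ => Real.exp (-β * ((n : ℝ) - α) ^ 2)) := by
  have := (gSummable β (2 * β * α) hβ).mul_left (Real.exp (-β * α ^ 2))
  apply this.congr
  intro n
  rw [← Real.exp_add]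
  congr 1
  ring

lemma gD_pos (β α : ℝ) (hβ : 0 < β) : 0 < gD β α :=
  Summable.tsum_pos (gSummableD β α hβ) (fun n => (Real.exp_pos _).le) 0 (Real.exp_pos _)

lemma gS_pos (β c : ℝ) (hβ : 0 < β) : 0 < gS β c :=
  Summable.tsum_pos (gSummable β c hβ) (fun n => (Real.exp_pos _).le) 0 (Real.exp_pos _)

lemma gS_eq (β c : ℝ) (hβ : 0 < β) :
    gS β c = Real.exp (c ^ 2 / (4 * β)) * gD β (c / (2 * β)) := by
  rw [gS, gD, ← tsum_mul_left]
  congr 1 with n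
  rw [← Real.exp_add]
  congr 1
  field_simp
  ring

lemma gD_add_one (β α : ℝ) : gD β (α + 1) = gD β α := by
  rw [gD, gD, ← (Equiv.subRight (1 : ℤ)).tsum_eq
    (fun n : ℤ => Real.exp (-β * ((n : ℝ) - α) ^ 2))]
  congr 1 with n
  simp only [Equiv.subRight_apply]
  push_cast
  ring_nf

lemma gD_sub_one (β α : ℝ) : gD β (α - 1) = gD β α := by
  conv_rhs => rw [show α = (α - 1) + 1 by ring, gD_add_one]

/-- Z(β,α) = gD β (α + 1/2) / gD β α -/
lemma thetaRatio_eq' (β α : ℝ) :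
    (∑' n : ℤ, Real.exp (-β * ((n : ℝ) - α - 1 / 2) ^ 2)) = gD β (α + 1 / 2) := by
  rw [gD]
  congr 1 with n
  ring_nf

lemma gD_sub_half (β α : ℝ) :
    gD β (α - 1 / 2) = gD β (α + 1 / 2) := by
  have := gD_add_one β (α - 1/2)
  rw [← this]
  congr 1
  ring

lemma tsum_pair {ι ι' : Type*} (f : ι → ℝ) (g : ι' → ℝ)
    (hf : Summable f) (hg : Summable g)
    (hf0 : ∀ n, 0 ≤ f n) (hg0 : ∀ n, 0 ≤ g n) :
    ∑' q : ι × ι', f q.1 * g q.2 = (∑' n, f n) * (∑' n, g n) :=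
  (Summable.tsum_mul_tsum hf hg (hf.mul_of_nonneg hg hf0 hg0)).symm

lemma tsum_triple' (f g h : ℤ → ℝ) (hf : Summable f) (hg : Summable g) (hh : Summable h)
    (hf0 : ∀ n, 0 ≤ f n) (hg0 : ∀ n, 0 ≤ g n) (hh0 : ∀ n, 0 ≤ h n) :
    ∑' n : ℤ × ℤ × ℤ, f n.1 * g n.2.1 * h n.2.2
      = (∑' n, f n) * (∑' n, g n) * (∑' n, h n) := by
  have hgh : Summable (fun q : ℤ × ℤ => g q.1 * h q.2) :=
    hg.mul_of_nonneg hh hg0 hh0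
  have hgh0 : ∀ q : ℤ × ℤ, 0 ≤ g q.1 * h q.2 := fun q => mul_nonneg (hg0 _) (hh0 _)
  have step1 : ∑' n : ℤ × ℤ × ℤ, f n.1 * g n.2.1 * h n.2.2
      = ∑' n : ℤ × ℤ × ℤ, f n.1 * (g n.2.1 * h n.2.2) := by
    congr 1 with n; ring
  rw [step1,
    tsum_pair f (fun q : ℤ × ℤ => g q.1 * h q.2) hf hgh hf0 hgh0,
    tsum_pair g h hg hh hg0 hh0, mul_assoc]

lemma tsum_triple (β c₁ c₂ c₃ : ℝ) (hβ : 0 < β) :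
    ∑' n : ℤ × ℤ × ℤ,
        (Real.exp (-β * (n.1 : ℝ) ^ 2 + c₁ * (n.1 : ℝ))
          * Real.exp (-β * (n.2.1 : ℝ) ^ 2 + c₂ * (n.2.1 : ℝ))
          * Real.exp (-β * (n.2.2 : ℝ) ^ 2 + c₃ * (n.2.2 : ℝ)))
      = gS β c₁ * gS β c₂ * gS β c₃ :=
  tsum_triple' _ _ _ (gSummable β c₁ hβ) (gSummable β c₂ hβ) (gSummable β c₃ hβ)
    (fun n => (Real.exp_pos _).le) (fun n => (Real.exp_pos _).le)
    (fun n => (Real.exp_pos _).le)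

lemma ratio_t (β l t : ℝ) (hβ : 0 < β) :
    gS β (l + t) / gS β l
      = Real.exp ((2 * l * t + t ^ 2) / (4 * β))
          * (gD β (l / (2 * β) + t / (2 * β)) / gD β (l / (2 * β))) := by
  rw [gS_eq β (l + t) hβ, gS_eq β l hβ]
  have h1 : (l + t) / (2 * β) = l / (2 * β) + t / (2 * β) := by ring
  rw [h1, mul_div_mul_comm, ← Real.exp_sub]
  congr 2
  field_simp
  ring


lemma thetaRatio_eq (β α : ℝ) : thetaRatio β α = gD β (α + 1 / 2) / gD β α := by
  rw [thetaRatio, thetaRatio_eq']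
  rfl

/-- expectation of the Metropolis rate observable under the
local Gibbs measure:
E[e^{β(n₁−2n₂+n₃)}] = e^{3β/2} e^{(λ₁−2λ₂+λ₃)/2} Z(β,λ₁/(2β)) Z(β,λ₃/(2β)),
and consequently the expected current equals
2 e^{3β/2} Z(β,λ₁/(2β)) Z(β,λ₃/(2β)) sinh((λ₁−2λ₂+λ₃)/2). -/
theorem gibbs_rate_expectation
    (β : ℝ) (hβ : 0 < β) (lam₁ lam₂ lam₃ : ℝ) :
    gibbsExpect β lam₁ lam₂ lam₃
        (fun n => Real.exp (β * ((n.1 : ℝ) - 2 * (n.2.1 : ℝ) + (n.2.2 : ℝ))))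
      = Real.exp (3 * β / 2) * Real.exp ((lam₁ - 2 * lam₂ + lam₃) / 2)
          * thetaRatio β (lam₁ / (2 * β)) * thetaRatio β (lam₃ / (2 * β))
    ∧ gibbsExpect β lam₁ lam₂ lam₃
        (fun n => Real.exp (β * ((n.1 : ℝ) - 2 * (n.2.1 : ℝ) + (n.2.2 : ℝ))))
      - gibbsExpect β lam₁ lam₂ lam₃
        (fun n => Real.exp (-β * ((n.1 : ℝ) - 2 * (n.2.1 : ℝ) + (n.2.2 : ℝ))))
      = 2 * Real.exp (3 * β / 2)
          * thetaRatio β (lam₁ / (2 * β)) * thetaRatio β (lam₃ / (2 * β))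
          * Real.sinh ((lam₁ - 2 * lam₂ + lam₃) / 2) := by
  have hβ0 : β ≠ 0 := hβ.ne'
  have key : ∀ t : ℝ,
      gibbsExpect β lam₁ lam₂ lam₃
          (fun n => Real.exp (t * ((n.1 : ℝ) - 2 * (n.2.1 : ℝ) + (n.2.2 : ℝ))))
        = gS β (lam₁ + t) / gS β lam₁ * (gS β (lam₂ + -2 * t) / gS β lam₂)
            * (gS β (lam₃ + t) / gS β lam₃) := by
    intro t
    rw [gibbsExpect]
    have hnum : (∑' n : ℤ × ℤ × ℤ,
          Real.exp (t * ((n.1 : ℝ) - 2 * (n.2.1 : ℝ) + (n.2.2 : ℝ)))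
            * gibbsWeight β lam₁ lam₂ lam₃ n)
        = gS β (lam₁ + t) * gS β (lam₂ + -2 * t) * gS β (lam₃ + t) := by
      rw [← tsum_triple β (lam₁ + t) (lam₂ + -2 * t) (lam₃ + t) hβ]
      congr 1 with n
      rw [gibbsWeight]
      simp only [← Real.exp_add]
      congr 1
      ring
    have hden : (∑' n : ℤ × ℤ × ℤ, gibbsWeight β lam₁ lam₂ lam₃ n)
        = gS β lam₁ * gS β lam₂ * gS β lam₃ := by
      rw [← tsum_triple β lam₁ lam₂ lam₃ hβ]
      rfl
    rw [hnum, hden, mul_div_mul_comm, mul_div_mul_comm]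
  have r1 : ∀ l : ℝ, gS β (l + β) / gS β l
      = Real.exp (l / 2 + β / 4) * thetaRatio β (l / (2 * β)) := by
    intro l
    rw [ratio_t β l β hβ, thetaRatio_eq]
    have h2 : β / (2 * β) = 1 / 2 := by field_simp
    have h3 : (2 * l * β + β ^ 2) / (4 * β) = l / 2 + β / 4 := by field_simp; ring
    rw [h2, h3]
  have r1' : ∀ l : ℝ, gS β (l + -β) / gS β l
      = Real.exp (-l / 2 + β / 4) * thetaRatio β (l / (2 * β)) := by
    intro l
    rw [ratio_t β l (-β) hβ, thetaRatio_eq]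
    have h4 : l / (2 * β) + -β / (2 * β) = l / (2 * β) - 1 / 2 := by field_simp; ring
    have h3 : (2 * l * -β + (-β) ^ 2) / (4 * β) = -l / 2 + β / 4 := by field_simp; ring
    rw [h4, gD_sub_half, h3]
  have r2 : gS β (lam₂ + -2 * β) / gS β lam₂ = Real.exp (β - lam₂) := by
    rw [show lam₂ + -2 * β = lam₂ + -(2 * β) by ring, ratio_t β lam₂ (-(2 * β)) hβ]
    have h4 : lam₂ / (2 * β) + -(2 * β) / (2 * β) = lam₂ / (2 * β) - 1 := by
      field_simp
      ring
    have h3 : (2 * lam₂ * -(2 * β) + (-(2 * β)) ^ 2) / (4 * β) = β - lam₂ := by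
      field_simp; ring
    rw [h4, gD_sub_one, div_self (gD_pos β _ hβ).ne', mul_one, h3]
  have r2' : gS β (lam₂ + -2 * -β) / gS β lam₂ = Real.exp (β + lam₂) := by
    rw [show lam₂ + -2 * -β = lam₂ + 2 * β by ring, ratio_t β lam₂ (2 * β) hβ]
    have h4 : lam₂ / (2 * β) + 2 * β / (2 * β) = lam₂ / (2 * β) + 1 := by
      field_simp
    have h3 : (2 * lam₂ * (2 * β) + (2 * β) ^ 2) / (4 * β) = β + lam₂ := by
      field_simp; ring
    rw [h4, gD_add_one, div_self (gD_pos β _ hβ).ne', mul_one, h3]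
  have hE : Real.exp (lam₁ / 2 + β / 4) * Real.exp (β - lam₂)
        * Real.exp (lam₃ / 2 + β / 4)
      = Real.exp (3 * β / 2) * Real.exp ((lam₁ - 2 * lam₂ + lam₃) / 2) := by
    rw [← Real.exp_add, ← Real.exp_add, ← Real.exp_add]
    congr 1
    ring
  have hE' : Real.exp (-lam₁ / 2 + β / 4) * Real.exp (β + lam₂)
        * Real.exp (-lam₃ / 2 + β / 4)
      = Real.exp (3 * β / 2) * Real.exp (-((lam₁ - 2 * lam₂ + lam₃) / 2)) := by
    rw [← Real.exp_add, ← Real.exp_add, ← Real.exp_add]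
    congr 1
    ring
  constructor
  · rw [key β, r1 lam₁, r2, r1 lam₃]
    linear_combination (thetaRatio β (lam₁ / (2 * β)) * thetaRatio β (lam₃ / (2 * β))) * hE
  · rw [key β, key (-β), r1 lam₁, r2, r1 lam₃, r1' lam₁, r2', r1' lam₃, Real.sinh_eq]
    linear_combination (thetaRatio β (lam₁ / (2 * β)) * thetaRatio β (lam₃ / (2 * β))) * hE
      - (thetaRatio β (lam₁ / (2 * β)) * thetaRatio β (lam₃ / (2 * β))) * hE'
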